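/- For every positive integer n, (1/√π) ∫_{−∞}^{∞} exp(−x²·φ(x·√(2/n))) dx = n!·e^n/(n^n·√(2πn)), where φ(z) = 2(e^z − 1 − z)/z², φ(0) = 1. -/

import Mathlib

noncomputable def φ (z : ℝ) : ℝ :=
  if z = 0 then 1 else 2 * (Real.exp z - 1 - z) / z ^ 2

open Real MeasureTheory Set

lemma exp_sub_integral (a : ℝ) (ha : 0 < a) :
    ∫ x : ℝ, Real.exp (a * x - a * Real.exp x) = (1 / a) ^ a * Real.Gamma a := by
  rw [← Real.integral_rpow_mul_exp_neg_mul_Ioi ha ha, ← Real.range_exp, ← image_univ,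
    integral_image_eq_integral_abs_deriv_smul MeasurableSet.univ
      (fun x _ => (Real.hasDerivAt_exp x).hasDerivWithinAt) Real.exp_injective.injOn _,
    Measure.restrict_univ]
  congr 1
  ext x
  rw [abs_of_pos (exp_pos x), smul_eq_mul, Real.rpow_def_of_pos (exp_pos x), Real.log_exp,
    ← Real.exp_add, ← Real.exp_add]
  congr 1
  ring

theorem f_eq_stirling_ratio (n : ℕ) (hn : 0 < n) :
    (Real.sqrt Real.pi)⁻¹ *
        ∫ x : ℝ, Real.exp (-(x ^ 2 * φ (x * Real.sqrt (2 / n))))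
      = (Nat.factorial n : ℝ) * Real.exp n / ((n : ℝ) ^ n * Real.sqrt (2 * Real.pi * n)) := by
  have hn0 : (0 : ℝ) < n := Nat.cast_pos.mpr hn
  set c : ℝ := Real.sqrt (2 / n) with hc_def
  have hc : 0 < c := Real.sqrt_pos.mpr (by positivity)
  have hc2 : c ^ 2 = 2 / n := Real.sq_sqrt (by positivity)
  -- Step 1: pointwise identity
  have hpt : ∀ x : ℝ, Real.exp (-(x ^ 2 * φ (x * c)))
      = Real.exp n * Real.exp ((n : ℝ) * (c * x) - n * Real.exp (c * x)) := by
    intro x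
    rw [← Real.exp_add]
    congr 1
    unfold φ
    by_cases hx : x = 0
    · simp [hx]
    · have hxc : x * c ≠ 0 := mul_ne_zero hx hc.ne'
      rw [if_neg hxc]
      have : (x * c) ^ 2 = x ^ 2 * (2 / n) := by rw [mul_pow, hc2]
      rw [this]
      have h1 : x ^ 2 * (2 * (Real.exp (x * c) - 1 - x * c) / (x ^ 2 * (2 / n)))
          = n * (Real.exp (x * c) - 1 - x * c) := by
        field_simp
      rw [h1]
      have : x * c = c * x := mul_comm x c
      rw [this]
      ring
  simp_rw [hpt]
  rw [integral_const_mul]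
  have hsub : ∫ x : ℝ, Real.exp ((n : ℝ) * (c * x) - n * Real.exp (c * x))
      = c⁻¹ * ((1 / (n : ℝ)) ^ (n : ℝ) * Real.Gamma n) := by
    have := MeasureTheory.Measure.integral_comp_mul_left
      (fun u : ℝ => Real.exp ((n : ℝ) * u - n * Real.exp u)) c
    rw [this, exp_sub_integral _ hn0, smul_eq_mul, abs_of_pos (inv_pos.mpr hc)]
  rw [hsub]
  -- Step 3: arithmetic
  have hGamma : Real.Gamma n = (Nat.factorial (n - 1) : ℝ) := by
    have : n = (n - 1) + 1 := (Nat.succ_pred_eq_of_pos hn).symm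
    rw [this]
    push_cast
    rw [Real.Gamma_nat_eq_factorial]
  have hfact : (Nat.factorial n : ℝ) = n * Nat.factorial (n - 1) := by
    rw [← Nat.mul_factorial_pred hn.ne']
    push_cast
    ring
  rw [hGamma, hfact, Real.rpow_natCast]
  have hsqrt : Real.sqrt (2 * Real.pi * n) = Real.sqrt 2 * Real.sqrt Real.pi * Real.sqrt n := by
    rw [Real.sqrt_mul (by positivity), Real.sqrt_mul (by norm_num)]
  have hcinv : c⁻¹ = Real.sqrt n / Real.sqrt 2 := by
    rw [hc_def, Real.sqrt_div (by norm_num : (0:ℝ) ≤ 2), inv_div]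
  rw [hsqrt, hcinv]
  have h2 : Real.sqrt (n : ℝ) * Real.sqrt n = n := Real.mul_self_sqrt hn0.le
  have hs2 : (0:ℝ) < Real.sqrt 2 := Real.sqrt_pos.mpr (by norm_num)
  have hsp : (0:ℝ) < Real.sqrt Real.pi := Real.sqrt_pos.mpr Real.pi_pos
  have hsn : (0:ℝ) < Real.sqrt n := Real.sqrt_pos.mpr hn0
  field_simp
  ring_nf
  rw [sq, h2]
  rw [mul_assoc, ← mul_pow, mul_inv_cancel₀ hn0.ne', one_pow, mul_one]
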